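/- The k-th antisymmetric tensor power map Λ^k from the m×m positive definite matrices to the ℓ×ℓ positive definite matrices (where ℓ = C(m,k)) is Lipschitz with respect to the Riemannian trace metric d(A,B) = ‖log(A^{-1/2} B A^{-1/2})‖₂, with Lipschitz constant √(k·C(m-1,k-1)); that is, d(Λ^k A, Λ^k B) ≤ √(k·C(m-1,k-1)) · d(A,B). -/

import Mathlib

open Matrix
open scoped ComplexOrder
noncomputable section
variable {n : Type*} [Fintype n] [DecidableEq n]

def opNorm (X : Matrix n n ℂ) : ℝ := ‖Matrix.toEuclideanCLM (𝕜 := ℂ) X‖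

def frobNorm (X : Matrix n n ℂ) : ℝ := Real.sqrt (∑ i, ∑ j, ‖X i j‖ ^ 2)

def matFun (f : ℝ → ℝ) (X : Matrix n n ℂ) : Matrix n n ℂ :=
  if hX : X.IsHermitian then
    (hX.eigenvectorUnitary : Matrix n n ℂ) * Matrix.diagonal (fun i => (f (hX.eigenvalues i) : ℂ)) *
      star (hX.eigenvectorUnitary : Matrix n n ℂ)
  else 0

def matLog (X : Matrix n n ℂ) : Matrix n n ℂ := matFun Real.log X
def matPow (X : Matrix n n ℂ) (t : ℝ) : Matrix n n ℂ := matFun (fun x => x ^ t) X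

def trMetric (A B : Matrix n n ℂ) : ℝ :=
  frobNorm (matLog (matPow A (-(1/2 : ℝ)) * B * matPow A (-(1/2 : ℝ))))

def exteriorPow {m : ℕ} (k : ℕ) (A : Matrix (Fin m) (Fin m) ℂ) :
    Matrix {s : Finset (Fin m) // s.card = k} {s : Finset (Fin m) // s.card = k} ℂ :=
  fun s t => (A.submatrix (fun i => (s.1.orderIsoOfFin s.2 i : Fin m))
    (fun j => (t.1.orderIsoOfFin t.2 j : Fin m))).det


section CB
open Equiv Finset

variable {R : Type*} [CommRing R]

local notation "ε" σ => ((Equiv.Perm.sign σ : ℤ) : R)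

lemma my_det_mul_aux {k m : ℕ} {M : Matrix (Fin k) (Fin m) R} {N : Matrix (Fin m) (Fin k) R}
    {p : Fin k → Fin m} (H : ¬Function.Injective p) :
    (∑ σ : Equiv.Perm (Fin k), (ε σ) * ∏ x, M (σ x) (p x) * N (p x) x) = 0 := by
  obtain ⟨i, j, hpij, hij⟩ : ∃ i j, p i = p j ∧ i ≠ j := by
    rw [Function.Injective] at H
    push_neg at H
    obtain ⟨a, b, h1, h2⟩ := H
    exact ⟨a, b, h1, h2⟩
  exact
    sum_involution (fun σ _ => σ * Equiv.swap i j)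
      (fun σ _ => by
        have : (∏ x, M (σ x) (p x)) = ∏ x, M ((σ * Equiv.swap i j) x) (p x) :=
          Fintype.prod_equiv (Equiv.swap i j) _ _ (by simp [Equiv.apply_swap_eq_self hpij])
        simp [this, Equiv.Perm.sign_swap hij, -Equiv.Perm.sign_swap', prod_mul_distrib])
      (fun σ _ _ => (not_congr Equiv.mul_swap_eq_iff).mpr hij) (fun _ _ => mem_univ _)
      fun σ _ => Equiv.mul_swap_involutive i j σ

lemma sum_perm_mul {k : ℕ} (M N : Matrix (Fin k) (Fin k) R) :
    ∑ τ : Equiv.Perm (Fin k), ∑ σ : Equiv.Perm (Fin k),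
      (ε σ) * ∏ i, M (σ i) (τ i) * N (τ i) i = det M * det N :=
  calc
    _ = ∑ σ : Perm (Fin k), ∑ τ : Perm (Fin k), (∏ i, N (σ i) i) * (ε τ) * ∏ j, M (τ j) (σ j) := by
      refine Finset.sum_congr rfl fun σ _ => Finset.sum_congr rfl fun τ _ => ?_
      rw [prod_mul_distrib]; ring
    _ = ∑ σ : Perm (Fin k), ∑ τ : Perm (Fin k),
        (∏ i, N (σ i) i) * ((ε σ) * (ε τ)) * ∏ i, M (τ i) i :=
      (sum_congr rfl fun σ _ =>
        Fintype.sum_equiv (Equiv.mulRight σ⁻¹) _ _ fun τ => by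
          have : (∏ j, M (τ j) (σ j)) = ∏ j, M ((τ * σ⁻¹) j) j := by
            rw [← (σ⁻¹ : _ ≃ _).prod_comp]
            simp only [Equiv.Perm.coe_mul, Equiv.Perm.inv_def, Equiv.apply_symm_apply, Function.comp_apply]
          have h : (ε σ) * (ε (τ * σ⁻¹)) = ε τ :=
            calc
              (ε σ) * (ε (τ * σ⁻¹)) = ε (τ * σ⁻¹ * σ) := by
                rw [mul_comm, Equiv.Perm.sign_mul (τ * σ⁻¹)]
                simp only [Int.cast_mul, Units.val_mul]
              _ = ε τ := by simp only [inv_mul_cancel_right]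
          simp_rw [Equiv.coe_mulRight, h]
          simp only [this])
    _ = det M * det N := by
      simp only [det_apply', Finset.mul_sum, mul_comm, mul_left_comm, mul_assoc]

variable {m k : ℕ}

def embOf (s : {s : Finset (Fin m) // s.card = k}) : Fin k → Fin m :=
  fun i => (s.1.orderIsoOfFin s.2 i : Fin m)

lemma embOf_injective (s : {s : Finset (Fin m) // s.card = k}) : Function.Injective (embOf s) :=
  fun a b h => (s.1.orderIsoOfFin s.2).injective (Subtype.ext h)

lemma embOf_mem (s : {s : Finset (Fin m) // s.card = k}) (i : Fin k) : embOf s i ∈ s.1 :=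
  (s.1.orderIsoOfFin s.2 i).2

lemma image_embOf (s : {s : Finset (Fin m) // s.card = k}) :
    Finset.image (embOf s) Finset.univ = s.1 := by
  ext a
  simp only [Finset.mem_image, Finset.mem_univ, true_and]
  constructor
  · rintro ⟨i, rfl⟩; exact embOf_mem s i
  · intro ha
    exact ⟨(s.1.orderIsoOfFin s.2).symm ⟨a, ha⟩, by simp [embOf]⟩

lemma cauchyBinet (M : Matrix (Fin k) (Fin m) R) (N : Matrix (Fin m) (Fin k) R) :
    det (M * N) = ∑ s : {s : Finset (Fin m) // s.card = k},
      det (M.submatrix id (embOf s)) * det (N.submatrix (embOf s) id) :=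
  calc
    det (M * N) = ∑ p : Fin k → Fin m, ∑ σ : Perm (Fin k),
        (ε σ) * ∏ i, M (σ i) (p i) * N (p i) i := by
      simp only [det_apply', mul_apply, prod_univ_sum, mul_sum, Fintype.piFinset_univ]
      rw [Finset.sum_comm]
    _ = ∑ p ∈ Finset.univ.filter (fun p : Fin k → Fin m => Function.Injective p),
        ∑ σ : Perm (Fin k), (ε σ) * ∏ i, M (σ i) (p i) * N (p i) i := by
      refine (sum_subset (filter_subset _ _) fun f _ hinj => my_det_mul_aux ?_).symm
      simpa only [mem_filter, mem_univ, true_and] using hinj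
    _ = ∑ x : {s : Finset (Fin m) // s.card = k} × Perm (Fin k),
        ∑ σ : Perm (Fin k), (ε σ) * ∏ i, M (σ i) (embOf x.1 (x.2 i)) * N (embOf x.1 (x.2 i)) i := by
      refine (Finset.sum_bij (fun x _ => fun i => embOf x.1 (x.2 i)) ?_ ?_ ?_ ?_).symm
      · intro x _
        simp only [mem_filter, mem_univ, true_and]
        exact (embOf_injective x.1).comp x.2.injective
      · have key : ∀ z : {s : Finset (Fin m) // s.card = k} × Perm (Fin k),
            Finset.image (fun i => embOf z.1 (z.2 i)) Finset.univ = z.1 := by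
          intro z
          rw [← image_embOf z.1]
          ext a
          simp only [Finset.mem_image, Finset.mem_univ, true_and]
          exact ⟨fun ⟨i, hi⟩ => ⟨z.2 i, hi⟩, fun ⟨i, hi⟩ => ⟨z.2.symm i, by simpa using hi⟩⟩
        intro x _ y _ h
        have hs : x.1 = y.1 := by apply Subtype.ext; rw [← key x, ← key y, h]
        have ht : x.2 = y.2 := by
          apply Equiv.ext
          intro i
          apply embOf_injective x.1
          rw [congrFun h i, hs]
        exact Prod.ext hs ht
      · intro p hp
        simp only [mem_filter, mem_univ, true_and] at hp
        have hcard : (Finset.image p Finset.univ).card = k := by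
          rw [Finset.card_image_of_injective _ hp, Finset.card_univ, Fintype.card_fin]
        set s : {s : Finset (Fin m) // s.card = k} := ⟨Finset.image p Finset.univ, hcard⟩
        have hmem : ∀ i, p i ∈ s.1 := fun i => Finset.mem_image_of_mem p (mem_univ i)
        have hinj : Function.Injective (fun i => (s.1.orderIsoOfFin s.2).symm ⟨p i, hmem i⟩) := by
          intro a b h
          have h2 : (⟨p a, hmem a⟩ : {x // x ∈ s.1}) = ⟨p b, hmem b⟩ :=
            (s.1.orderIsoOfFin s.2).symm.injective h
          exact hp (congrArg Subtype.val h2)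
        refine ⟨⟨s, Equiv.ofBijective _ ((Finite.injective_iff_bijective).mp hinj)⟩, mem_univ _, ?_⟩
        funext i
        simp [embOf, Equiv.ofBijective_apply]
      · intro x _; rfl
    _ = ∑ s : {s : Finset (Fin m) // s.card = k},
      det (M.submatrix id (embOf s)) * det (N.submatrix (embOf s) id) := by
      rw [Fintype.sum_prod_type]
      refine Finset.sum_congr rfl fun s _ => ?_
      exact sum_perm_mul (M.submatrix id (embOf s)) (N.submatrix (embOf s) id)

lemma exteriorPow_apply (A : Matrix (Fin m) (Fin m) ℂ) (s t : {s : Finset (Fin m) // s.card = k}) :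
    exteriorPow k A s t = (A.submatrix (embOf s) (embOf t)).det := rfl

lemma exteriorPow_mul (A B : Matrix (Fin m) (Fin m) ℂ) :
    exteriorPow k (A * B) = exteriorPow k A * exteriorPow k B := by
  ext s t
  have h1 : (A * B).submatrix (embOf s) (embOf t)
      = (A.submatrix (embOf s) id) * (B.submatrix id (embOf t)) := by
    ext i j
    simp [Matrix.mul_apply]
  rw [Matrix.mul_apply, exteriorPow_apply, h1, cauchyBinet]
  refine Finset.sum_congr rfl fun u _ => ?_
  rw [exteriorPow_apply, exteriorPow_apply]
  simp [Matrix.submatrix_submatrix, Function.comp_def]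

lemma exteriorPow_conjTranspose (A : Matrix (Fin m) (Fin m) ℂ) :
    exteriorPow k Aᴴ = (exteriorPow k A)ᴴ := by
  ext s t
  rw [Matrix.conjTranspose_apply, exteriorPow_apply, exteriorPow_apply,
    ← Matrix.conjTranspose_submatrix, Matrix.det_conjTranspose]

lemma exteriorPow_diagonal (d : Fin m → ℂ) :
    exteriorPow k (Matrix.diagonal d) = Matrix.diagonal (fun s => ∏ x ∈ s.1, d x) := by
  ext s t
  by_cases h : s = t
  · subst h
    rw [exteriorPow_apply, Matrix.submatrix_diagonal d _ (embOf_injective s),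
      Matrix.det_diagonal, Matrix.diagonal_apply_eq, ← image_embOf s,
      Finset.prod_image (fun a _ b _ hab => embOf_injective s hab)]
    rfl
  · rw [Matrix.diagonal_apply_ne _ h, exteriorPow_apply]
    have hne : ¬ s.1 ⊆ t.1 := by
      intro hsub
      exact h (Subtype.ext (Finset.eq_of_subset_of_card_le hsub (by rw [s.2, t.2])))
    obtain ⟨a, ha, hat⟩ := Finset.not_subset.mp hne
    apply Matrix.det_eq_zero_of_row_eq_zero ((s.1.orderIsoOfFin s.2).symm ⟨a, ha⟩)
    intro j
    rw [Matrix.submatrix_apply]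
    have : embOf s ((s.1.orderIsoOfFin s.2).symm ⟨a, ha⟩) = a := by simp [embOf]
    rw [this]
    exact Matrix.diagonal_apply_ne' d (fun hc => hat (hc ▸ embOf_mem t j))

lemma exteriorPow_one : exteriorPow k (1 : Matrix (Fin m) (Fin m) ℂ) = 1 := by
  rw [← Matrix.diagonal_one, exteriorPow_diagonal]
  simp

lemma exteriorPow_unitary {U : Matrix (Fin m) (Fin m) ℂ} (hU : U ∈ Matrix.unitaryGroup (Fin m) ℂ) :
    exteriorPow k U ∈ Matrix.unitaryGroup {s : Finset (Fin m) // s.card = k} ℂ := by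
  rw [Matrix.mem_unitaryGroup_iff'] at hU ⊢
  have : star (exteriorPow k U) = exteriorPow k (star U) := (exteriorPow_conjTranspose U).symm
  rw [this, ← exteriorPow_mul, hU, exteriorPow_one]

end CB

section Spectral
variable {N : Type*} [Fintype N] [DecidableEq N]

lemma isUnit_of_mem_unitary {U : Matrix N N ℂ} (hU : U ∈ Matrix.unitaryGroup N ℂ) : IsUnit U :=
  ⟨Unitary.toUnits ⟨U, hU⟩, rfl⟩

lemma isHermitian_unitary_conj_diag {U : Matrix N N ℂ} (hU : U ∈ Matrix.unitaryGroup N ℂ)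
    (d : N → ℝ) :
    (U * Matrix.diagonal (fun i => (d i : ℂ)) * star U).IsHermitian := by
  have : star U = Uᴴ := rfl
  rw [Matrix.IsHermitian, this, Matrix.conjTranspose_mul, Matrix.conjTranspose_mul,
    Matrix.conjTranspose_conjTranspose, Matrix.diagonal_conjTranspose]
  have hd : star (fun i => (d i : ℂ)) = fun i => (d i : ℂ) := by
    funext i; simp [Complex.conj_ofReal]
  rw [hd, Matrix.mul_assoc]

lemma matFun_unitary_conj (f : ℝ → ℝ) {U : Matrix N N ℂ} (hU : U ∈ Matrix.unitaryGroup N ℂ)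
    (d : N → ℝ) :
    matFun f (U * Matrix.diagonal (fun i => (d i : ℂ)) * star U)
      = U * Matrix.diagonal (fun i => (f (d i) : ℂ)) * star U := by
  set X := U * Matrix.diagonal (fun i => (d i : ℂ)) * star U with hXdef
  have hX : X.IsHermitian := isHermitian_unitary_conj_diag hU d
  rw [matFun, dif_pos hX]
  set W := (hX.eigenvectorUnitary : Matrix N N ℂ) with hWdef
  have hW : W ∈ Matrix.unitaryGroup N ℂ := SetLike.coe_mem _
  set lam := hX.eigenvalues with hlamdef
  have hspec : W * Matrix.diagonal (fun i => (lam i : ℂ)) * star W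
      = U * Matrix.diagonal (fun i => (d i : ℂ)) * star U := by
    exact hX.spectral_theorem.symm
  have hU1 : star U * U = 1 := Matrix.mem_unitaryGroup_iff'.mp hU
  have hU2 : U * star U = 1 := Matrix.mem_unitaryGroup_iff.mp hU
  have hW1 : star W * W = 1 := Matrix.mem_unitaryGroup_iff'.mp hW
  have hW2 : W * star W = 1 := Matrix.mem_unitaryGroup_iff.mp hW
  set M := star W * U with hMdef
  have h1 : Matrix.diagonal (fun i => (lam i : ℂ)) * M = M * Matrix.diagonal (fun i => (d i : ℂ)) := by
    have h0 := congrArg (fun Y => star W * Y * U) hspec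
    calc Matrix.diagonal (fun i => (lam i : ℂ)) * M
        = (star W * W) * Matrix.diagonal (fun i => (lam i : ℂ)) * (star W * U) := by
          rw [hW1, Matrix.one_mul]
      _ = star W * (W * Matrix.diagonal (fun i => (lam i : ℂ)) * star W) * U := by
          simp only [Matrix.mul_assoc]
      _ = star W * (U * Matrix.diagonal (fun i => (d i : ℂ)) * star U) * U := by rw [hspec]
      _ = (star W * U) * Matrix.diagonal (fun i => (d i : ℂ)) * (star U * U) := by
          simp only [Matrix.mul_assoc]
      _ = M * Matrix.diagonal (fun i => (d i : ℂ)) := by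
          rw [hU1, Matrix.mul_one]
  have h2 : Matrix.diagonal (fun i => (f (lam i) : ℂ)) * M
      = M * Matrix.diagonal (fun i => (f (d i) : ℂ)) := by
    ext i j
    rw [Matrix.diagonal_mul, Matrix.mul_diagonal]
    by_cases hMij : M i j = 0
    · rw [hMij, mul_zero, zero_mul]
    · have := congrFun (congrFun h1 i) j
      rw [Matrix.diagonal_mul, Matrix.mul_diagonal] at this
      have hld : lam i = d j := by
        have h3 : (lam i : ℂ) * M i j = (d j : ℂ) * M i j := by rw [this, mul_comm]
        exact_mod_cast mul_right_cancel₀ hMij h3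
      rw [hld, mul_comm]
  calc W * Matrix.diagonal (fun i => (f (lam i) : ℂ)) * star W
      = W * (Matrix.diagonal (fun i => (f (lam i) : ℂ)) * (star W * U)) * star U := by
        simp only [Matrix.mul_assoc]
        rw [hU2, Matrix.mul_one]
    _ = W * (M * Matrix.diagonal (fun i => (f (d i) : ℂ))) * star U := by rw [h2]
    _ = (W * star W) * U * Matrix.diagonal (fun i => (f (d i) : ℂ)) * star U := by
        simp only [hMdef, Matrix.mul_assoc]
    _ = U * Matrix.diagonal (fun i => (f (d i) : ℂ)) * star U := by
        rw [hW2, Matrix.one_mul]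

end Spectral

section Helpers
variable {N : Type*} [Fintype N] [DecidableEq N]

lemma frobNorm_unitary_diag {W : Matrix N N ℂ} (hW : W ∈ Matrix.unitaryGroup N ℂ) (r : N → ℝ) :
    frobNorm (W * Matrix.diagonal (fun i => (r i : ℂ)) * star W) = Real.sqrt (∑ i, r i ^ 2) := by
  set X := W * Matrix.diagonal (fun i => (r i : ℂ)) * star W with hXdef
  rw [frobNorm]
  congr 1
  have habs : ∀ (i j : N), ‖X i j‖ ^ 2 = (Complex.normSq (X i j) : ℝ) := fun i j =>
    Complex.sq_norm (X i j)
  have key : (∑ i, ∑ j, (‖X i j‖) ^ 2) = (Matrix.trace (Xᴴ * X)).re := by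
    rw [Matrix.trace]
    have : ∀ j, (Xᴴ * X).diag j = ∑ i, (starRingEnd ℂ) (X i j) * X i j := by
      intro j
      simp [Matrix.diag, Matrix.mul_apply, Matrix.conjTranspose_apply]
    rw [show (∑ j, (Xᴴ * X).diag j) = ∑ j, ∑ i, (starRingEnd ℂ) (X i j) * X i j from
      Finset.sum_congr rfl fun j _ => this j]
    rw [Complex.re_sum]
    rw [Finset.sum_comm]
    refine Finset.sum_congr rfl fun i _ => ?_
    rw [Complex.re_sum]
    refine Finset.sum_congr rfl fun j _ => ?_
    rw [habs]
    rw [mul_comm, Complex.mul_conj]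
    simp
  rw [key]
  have hW1 : star W * W = 1 := Matrix.mem_unitaryGroup_iff'.mp hW
  have hXherm : Xᴴ = X := isHermitian_unitary_conj_diag hW r
  rw [hXherm]
  have hXX : X * X = W * Matrix.diagonal (fun i => ((r i : ℂ) * (r i : ℂ))) * star W := by
    rw [hXdef]
    calc (W * Matrix.diagonal (fun i => (r i : ℂ)) * star W) *
          (W * Matrix.diagonal (fun i => (r i : ℂ)) * star W)
        = W * Matrix.diagonal (fun i => (r i : ℂ)) * (star W * W) *
            Matrix.diagonal (fun i => (r i : ℂ)) * star W := by
          simp only [Matrix.mul_assoc]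
      _ = W * (Matrix.diagonal (fun i => (r i : ℂ)) * Matrix.diagonal (fun i => (r i : ℂ))) *
            star W := by rw [hW1, Matrix.mul_one]; simp only [Matrix.mul_assoc]
      _ = _ := by rw [Matrix.diagonal_mul_diagonal]
  rw [hXX]
  rw [Matrix.trace_mul_cycle]
  rw [hW1, Matrix.one_mul, Matrix.trace_diagonal]
  rw [Complex.re_sum]
  refine Finset.sum_congr rfl fun i _ => ?_
  rw [← Complex.ofReal_mul]
  rw [Complex.ofReal_re, sq]

lemma posDef_conj_isUnit {P B : Matrix N N ℂ} (hB : B.PosDef) (hP : IsUnit P) :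
    (P * B * Pᴴ).PosDef := by
  refine Matrix.PosDef.of_dotProduct_mulVec_pos ?_ ?_
  · exact Matrix.isHermitian_mul_mul_conjTranspose P hB.1
  · intro x hx
    have hPH : IsUnit Pᴴ := by
      rw [Matrix.isUnit_iff_isUnit_det, Matrix.det_conjTranspose]
      exact (Matrix.isUnit_iff_isUnit_det P |>.mp hP).star
    have hinj := Matrix.mulVec_injective_iff_isUnit.mpr hPH
    have hy : Pᴴ *ᵥ x ≠ 0 := fun h => hx (hinj (by rw [h, Matrix.mulVec_zero]))
    have hcalc : dotProduct (star x) ((P * B * Pᴴ) *ᵥ x)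
        = dotProduct (star (Pᴴ *ᵥ x)) (B *ᵥ (Pᴴ *ᵥ x)) := by
      rw [← Matrix.mulVec_mulVec, ← Matrix.mulVec_mulVec]
      rw [dotProduct_mulVec (star x) P]
      rw [Matrix.star_mulVec, Matrix.conjTranspose_conjTranspose]
    rw [hcalc]
    exact hB.dotProduct_mulVec_pos hy

end Helpers

section Counting
variable {m k : ℕ}

lemma card_subsets_containing (hk1 : 1 ≤ k) (i : Fin m) :
    (Finset.univ.filter (fun s : {s : Finset (Fin m) // s.card = k} => i ∈ s.1)).card
      = Nat.choose (m - 1) (k - 1) := by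
  have hcard : ((Finset.univ : Finset (Fin m)).erase i).card = m - 1 := by
    rw [Finset.card_erase_of_mem (Finset.mem_univ i), Finset.card_univ, Fintype.card_fin]
  rw [← hcard, ← Finset.card_powersetCard]
  refine Finset.card_bij' (fun s _ => s.1.erase i)
    (fun t ht => ⟨insert i t, ?_⟩) ?_ ?_ ?_ ?_
  · obtain ⟨hsub, hc⟩ := Finset.mem_powersetCard.mp ht
    have hit : i ∉ t := fun hmem => (Finset.mem_erase.mp (hsub hmem)).1 rfl
    rw [Finset.card_insert_of_notMem hit, hc]
    omega
  · intro s hs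
    rw [Finset.mem_filter] at hs
    rw [Finset.mem_powersetCard]
    constructor
    · intro x hx
      rw [Finset.mem_erase] at hx ⊢
      exact ⟨hx.1, Finset.mem_univ x⟩
    · rw [Finset.card_erase_of_mem hs.2, s.2]
  · intro t ht
    rw [Finset.mem_filter]
    exact ⟨Finset.mem_univ _, Finset.mem_insert_self i t⟩
  · intro s hs
    rw [Finset.mem_filter] at hs
    exact Subtype.ext (Finset.insert_erase hs.2)
  · intro t ht
    obtain ⟨hsub, _⟩ := Finset.mem_powersetCard.mp ht
    have hit : i ∉ t := fun hmem => (Finset.mem_erase.mp (hsub hmem)).1 rfl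
    exact Finset.erase_insert hit

lemma sum_sum_subsets (hk1 : 1 ≤ k) (g : Fin m → ℝ) :
    ∑ s : {s : Finset (Fin m) // s.card = k}, ∑ x ∈ s.1, g x
      = (Nat.choose (m - 1) (k - 1) : ℝ) * ∑ i, g i := by
  have h1 : ∀ s : {s : Finset (Fin m) // s.card = k}, ∑ x ∈ s.1, g x
      = ∑ i : Fin m, if i ∈ s.1 then g i else 0 := by
    intro s
    rw [Finset.sum_ite_mem, Finset.univ_inter]
  simp_rw [h1]
  rw [Finset.sum_comm, Finset.mul_sum]
  refine Finset.sum_congr rfl fun i _ => ?_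
  rw [← Finset.sum_filter, Finset.sum_const, card_subsets_containing hk1 i, nsmul_eq_mul]

lemma final_ineq (hk1 : 1 ≤ k) (y : Fin m → ℝ) :
    Real.sqrt (∑ s : {s : Finset (Fin m) // s.card = k}, (∑ x ∈ s.1, y x) ^ 2)
      ≤ Real.sqrt ((k : ℝ) * (Nat.choose (m - 1) (k - 1) : ℝ)) * Real.sqrt (∑ i, y i ^ 2) := by
  rw [← Real.sqrt_mul (by positivity)]
  apply Real.sqrt_le_sqrt
  calc ∑ s : {s : Finset (Fin m) // s.card = k}, (∑ x ∈ s.1, y x) ^ 2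
      ≤ ∑ s : {s : Finset (Fin m) // s.card = k}, (k : ℝ) * ∑ x ∈ s.1, (y x) ^ 2 := by
        refine Finset.sum_le_sum fun s _ => ?_
        have h := sq_sum_le_card_mul_sum_sq (s := s.1) (f := y)
        rwa [s.2] at h
    _ = (k : ℝ) * ((Nat.choose (m - 1) (k - 1) : ℝ) * ∑ i, y i ^ 2) := by
        rw [← Finset.mul_sum, sum_sum_subsets hk1]
    _ = (k : ℝ) * (Nat.choose (m - 1) (k - 1) : ℝ) * ∑ i, y i ^ 2 := by ring

end Counting

theorem stmt3 {m k : ℕ} (hk1 : 1 ≤ k) (hk2 : k ≤ m)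
    (A B : Matrix (Fin m) (Fin m) ℂ) (hA : A.PosDef) (hB : B.PosDef) :
    trMetric (exteriorPow k A) (exteriorPow k B) ≤
      Real.sqrt (k * Nat.choose (m - 1) (k - 1)) * trMetric A B := by
  classical
  set lam := hA.1.eigenvalues with hlam
  set U : Matrix (Fin m) (Fin m) ℂ := (hA.1.eigenvectorUnitary : Matrix (Fin m) (Fin m) ℂ)
    with hUdef
  have hU : U ∈ Matrix.unitaryGroup (Fin m) ℂ := SetLike.coe_mem _
  have hlampos : ∀ i, 0 < lam i := hA.eigenvalues_pos
  have hspecA : A = U * Matrix.diagonal (fun i => (lam i : ℂ)) * star U := hA.1.spectral_theorem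
  set S := U * Matrix.diagonal (fun i => ((lam i ^ (-(1/2 : ℝ)) : ℝ) : ℂ)) * star U with hSdef
  have hmatpowA : matPow A (-(1/2 : ℝ)) = S := by
    rw [matPow]
    conv_lhs => rw [hspecA]
    exact matFun_unitary_conj (fun x => x ^ (-(1/2 : ℝ))) hU lam
  have hSposdef : S.PosDef := by
    have hdiag : (Matrix.diagonal (fun i => ((lam i ^ (-(1/2 : ℝ)) : ℝ) : ℂ))).PosDef :=
      Matrix.PosDef.diagonal (fun i =>
        Complex.zero_lt_real.mpr (Real.rpow_pos_of_pos (hlampos i) _))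
    exact posDef_conj_isUnit hdiag (isUnit_of_mem_unitary hU)
  have hSherm : S.IsHermitian := hSposdef.1
  set C := S * B * S with hCdef
  have hCposdef : C.PosDef := by
    have h := posDef_conj_isUnit hB hSposdef.isUnit
    rwa [hSherm.eq] at h
  set mu := hCposdef.1.eigenvalues with hmu
  set V : Matrix (Fin m) (Fin m) ℂ := (hCposdef.1.eigenvectorUnitary : Matrix (Fin m) (Fin m) ℂ)
    with hVdef
  have hV : V ∈ Matrix.unitaryGroup (Fin m) ℂ := SetLike.coe_mem _
  have hmupos : ∀ i, 0 < mu i := hCposdef.eigenvalues_pos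
  have hspecC : C = V * Matrix.diagonal (fun i => (mu i : ℂ)) * star V := hCposdef.1.spectral_theorem
  have hRHS : trMetric A B = Real.sqrt (∑ i, Real.log (mu i) ^ 2) := by
    unfold trMetric
    rw [hmatpowA, ← hCdef, matLog]
    conv_lhs => rw [hspecC]
    rw [matFun_unitary_conj Real.log hV mu, frobNorm_unitary_diag hV]
  have hEU : exteriorPow k U ∈ Matrix.unitaryGroup {s : Finset (Fin m) // s.card = k} ℂ :=
    exteriorPow_unitary hU
  have hEV : exteriorPow k V ∈ Matrix.unitaryGroup {s : Finset (Fin m) // s.card = k} ℂ :=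
    exteriorPow_unitary hV
  have hprod : ∀ (M : Matrix (Fin m) (Fin m) ℂ) (d : Fin m → ℝ),
      exteriorPow k (M * Matrix.diagonal (fun i => (d i : ℂ)) * star M)
        = exteriorPow k M * Matrix.diagonal (fun s : {s : Finset (Fin m) // s.card = k} =>
            ((∏ x ∈ s.1, d x : ℝ) : ℂ)) * star (exteriorPow k M) := by
    intro M d
    rw [Matrix.star_eq_conjTranspose, Matrix.star_eq_conjTranspose,
      exteriorPow_mul, exteriorPow_mul, exteriorPow_diagonal, exteriorPow_conjTranspose]
    have hfun : (fun s : {s : Finset (Fin m) // s.card = k} => ∏ x ∈ s.1, (d x : ℂ))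
        = fun s : {s : Finset (Fin m) // s.card = k} => ((∏ x ∈ s.1, d x : ℝ) : ℂ) := by
      funext s; rw [Complex.ofReal_prod]
    rw [hfun]
  have hEA : exteriorPow k A = exteriorPow k U
      * Matrix.diagonal (fun s : {s : Finset (Fin m) // s.card = k} =>
          ((∏ x ∈ s.1, lam x : ℝ) : ℂ)) * star (exteriorPow k U) := by
    conv_lhs => rw [hspecA]
    exact hprod U lam
  have hES : exteriorPow k S = exteriorPow k U
      * Matrix.diagonal (fun s : {s : Finset (Fin m) // s.card = k} =>
          (((∏ x ∈ s.1, lam x) ^ (-(1/2 : ℝ)) : ℝ) : ℂ)) * star (exteriorPow k U) := by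
    have hfun : (fun s : {s : Finset (Fin m) // s.card = k} =>
          ((∏ x ∈ s.1, lam x ^ (-(1/2 : ℝ)) : ℝ) : ℂ))
        = fun s : {s : Finset (Fin m) // s.card = k} =>
          (((∏ x ∈ s.1, lam x) ^ (-(1/2 : ℝ)) : ℝ) : ℂ) := by
      funext s
      rw [Real.finset_prod_rpow s.1 lam (fun x _ => (hlampos x).le)]
    rw [hSdef, hprod U (fun i => lam i ^ (-(1/2 : ℝ))), hfun]
  have hmatpowEA : matPow (exteriorPow k A) (-(1/2 : ℝ)) = exteriorPow k S := by
    rw [matPow]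
    conv_lhs => rw [hEA]
    rw [matFun_unitary_conj (fun x => x ^ (-(1/2 : ℝ))) hEU
      (fun s => ∏ x ∈ s.1, lam x), hES]
  have hEC : exteriorPow k C = exteriorPow k V
      * Matrix.diagonal (fun s : {s : Finset (Fin m) // s.card = k} =>
          ((∏ x ∈ s.1, mu x : ℝ) : ℂ)) * star (exteriorPow k V) := by
    conv_lhs => rw [hspecC]
    exact hprod V mu
  have hLHS : trMetric (exteriorPow k A) (exteriorPow k B)
      = Real.sqrt (∑ s : {s : Finset (Fin m) // s.card = k},
          (Real.log (∏ x ∈ s.1, mu x)) ^ 2) := by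
    unfold trMetric
    rw [hmatpowEA, ← exteriorPow_mul, ← exteriorPow_mul, ← hCdef, matLog, hEC,
      matFun_unitary_conj Real.log hEV (fun s => ∏ x ∈ s.1, mu x),
      frobNorm_unitary_diag hEV]
  rw [hLHS, hRHS]
  have hlog : ∀ s : {s : Finset (Fin m) // s.card = k},
      Real.log (∏ x ∈ s.1, mu x) = ∑ x ∈ s.1, Real.log (mu x) :=
    fun s => Real.log_prod (fun x _ => (hmupos x).ne')
  simp_rw [hlog]
  have := final_ineq (m := m) hk1 (fun i => Real.log (mu i))
  convert this using 3
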